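/- (Myhill-Nerode theorem for Wheeler languages) For a language L ⊆ Σ*, the following are equivalent: (1) L is recognized by a Wheeler NFA; (2) the input-consistent convex refinement ≡ᶜ_L of the Myhill-Nerode relation on Pref(L) has finite index; (3) L is a union of classes of a convex, input-consistent, right-invariant equivalence of finite index on Pref(L); (4) L is recognized by a Wheeler DFA. -/

import Mathlib

variable {V : Type*} {A : Type*}

/-- `Reaches E s α v`: the string `α` labels a path in the labeled graph `E`
from the state `s` to the state `v`. -/
inductive Reaches (E : V → A → V → Prop) (s : V) : List A → V → Prop
  | nil : Reaches E s [] s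
  | snoc {α : List A} {u w : V} {a : A} :
      Reaches E s α u → E u a w → Reaches E s (α ++ [a]) w

/-- Co-lexicographic (strict) order on strings: lexicographic order of reverses. -/
def ColexLt [LinearOrder A] (α β : List A) : Prop :=
  List.Lex (· < ·) α.reverse β.reverse

/-- `r` is a strict total order. -/
def StrictTotal (r : V → V → Prop) : Prop :=
  (∀ x, ¬ r x x) ∧ (∀ x y z, r x y → r y z → r x z) ∧
  (∀ x y : V, x ≠ y → r x y ∨ r y x)

/-- `r` is a Wheeler order for the labeled graph `E`: a strict total order on states
such that in-degree-0 states precede all states with positive in-degree, edges with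
strictly smaller labels point to strictly smaller states, and equally-labeled edges
from ordered sources point to weakly ordered targets. -/
def WheelerRel [LinearOrder A] (E : V → A → V → Prop) (r : V → V → Prop) : Prop :=
  StrictTotal r ∧
  (∀ x w : V, (∀ u a, ¬ E u a x) → (∃ u a, E u a w) → r x w) ∧
  (∀ u₁ a₁ v₁ u₂ a₂ v₂, E u₁ a₁ v₁ → E u₂ a₂ v₂ → a₁ < a₂ → r v₁ v₂) ∧
  (∀ u₁ v₁ u₂ v₂ a, E u₁ a v₁ → E u₂ a v₂ → r u₁ u₂ → r v₁ v₂ ∨ v₁ = v₂)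

/-- The language accepted by the automaton `(V, E, F, s)`. -/
def Lang (E : V → A → V → Prop) (F : Set V) (s : V) : Set (List A) :=
  {α | ∃ w ∈ F, Reaches E s α w}

/-- `Pref(L(A))`: the set of prefixes of accepted strings. -/
def PrefL (E : V → A → V → Prop) (F : Set V) (s : V) : Set (List A) :=
  {α | ∃ β, α ++ β ∈ Lang E F s}

/-- `I_u`: the strings in `Pref(L(A))` labeling a path from `s` to `u`. -/
def Iset (E : V → A → V → Prop) (F : Set V) (s u : V) : Set (List A) :=
  {α | α ∈ PrefL E F s ∧ Reaches E s α u}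

/-- `I_α`: the set of states reached from `s` by a path labeled `α`. -/
def Istr (E : V → A → V → Prop) (s : V) (α : List A) : Set V :=
  {w | Reaches E s α w}

/-- The set of prefixes of words of a language. -/
def PrefSet (L : Set (List A)) : Set (List A) := {α | ∃ β, α ++ β ∈ L}

/-- The Myhill-Nerode relation: `α ≡_L β` iff `αγ ∈ L ⟺ βγ ∈ L` for all `γ`. -/
def MNrel (L : Set (List A)) (α β : List A) : Prop :=
  ∀ γ, (α ++ γ ∈ L ↔ β ++ γ ∈ L)

/-- `≡ᶜ_L`: the input-consistent, convex refinement of Myhill-Nerode. -/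
def MNc [LinearOrder A] (L : Set (List A)) (α β : List A) : Prop :=
  MNrel L α β ∧ α.getLast? = β.getLast? ∧
  ∀ γ ∈ PrefSet L,
    ((ColexLt α γ ∧ ColexLt γ β) ∨ (ColexLt β γ ∧ ColexLt γ α)) → MNrel L γ α

/-- `L` is recognized by a Wheeler NFA. -/
def WheelerNFARecog {A : Type*} [LinearOrder A] (L : Set (List A)) : Prop :=
  ∃ (W : Type) (_ : Fintype W) (E : W → A → W → Prop) (F : Set W) (s : W)
    (r : W → W → Prop),
    (∀ u a, ¬ E u a s) ∧
    (∀ x : W, (∀ u a, ¬ E u a x) → x = s) ∧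
    (∀ x : W, ∃ α, Reaches E s α x) ∧
    WheelerRel E r ∧
    Lang E F s = L

/-- `L` is recognized by a Wheeler DFA. -/
def WheelerDFARecog {A : Type*} [LinearOrder A] (L : Set (List A)) : Prop :=
  ∃ (W : Type) (_ : Fintype W) (E : W → A → W → Prop) (F : Set W) (s : W)
    (r : W → W → Prop),
    (∀ u a v v', E u a v → E u a v' → v = v') ∧
    (∀ u a, ¬ E u a s) ∧
    (∀ x : W, (∀ u a, ¬ E u a x) → x = s) ∧
    (∀ x : W, ∃ α, Reaches E s α x) ∧
    WheelerRel E r ∧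
    Lang E F s = L

/-- `≡ᶜ_L` has finite index on `Pref(L)`. -/
def MNcFiniteIndex {A : Type*} [LinearOrder A] (L : Set (List A)) : Prop :=
  {Cl : Set (List A) | ∃ α ∈ PrefSet L, Cl = {β ∈ PrefSet L | MNc L α β}}.Finite

/-- `L` is a union of classes of a convex, input-consistent, right-invariant
equivalence of finite index on `Pref(L)`. -/
def UnionOfNiceEquiv {A : Type*} [LinearOrder A] (L : Set (List A)) : Prop :=
  ∃ sim : List A → List A → Prop,
    (∀ α β, sim α β → α ∈ PrefSet L ∧ β ∈ PrefSet L) ∧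
    (∀ α ∈ PrefSet L, sim α α) ∧
    (∀ α β, sim α β → sim β α) ∧
    (∀ α β γ, sim α β → sim β γ → sim α γ) ∧
    (∀ α β γ, sim α β → (α ++ γ) ∈ PrefSet L →
      ((β ++ γ) ∈ PrefSet L ∧ sim (α ++ γ) (β ++ γ))) ∧
    (∀ α β γ, sim α γ → β ∈ PrefSet L → ColexLt α β → ColexLt β γ → sim α β) ∧
    (∀ α β, sim α β → α.getLast? = β.getLast?) ∧
    {Cl : Set (List A) | ∃ α ∈ PrefSet L, Cl = {β | sim α β}}.Finite ∧
    (∀ α β, α ∈ L → sim α β → β ∈ L)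

set_option linter.unusedSectionVars false

section ReachesLemmas
variable {V : Type*} {A : Type*}

theorem reaches_nil_iff {E : V → A → V → Prop} {s v : V} :
    Reaches E s [] v ↔ v = s := by
  constructor
  · intro h
    generalize hl : ([] : List A) = l at h
    cases h with
    | nil => rfl
    | snoc h1 h2 => simp at hl
  · rintro rfl; exact .nil

theorem reaches_snoc_iff {E : V → A → V → Prop} {s v : V} {l : List A} {a : A} :
    Reaches E s (l ++ [a]) v ↔ ∃ u, Reaches E s l u ∧ E u a v := by
  constructor
  · intro h
    generalize hl : l ++ [a] = m at h
    cases h with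
    | nil => simp at hl
    | @snoc α u w b h1 h2 =>
      obtain ⟨h3, h4⟩ := List.append_inj' hl rfl
      simp at h4
      subst h3; subst h4
      exact ⟨u, h1, h2⟩
  · rintro ⟨u, h1, h2⟩; exact h1.snoc h2

theorem reaches_append_iff {E : V → A → V → Prop} {s v : V} {α γ : List A} :
    Reaches E s (α ++ γ) v ↔ ∃ u, Reaches E s α u ∧ Reaches E u γ v := by
  induction γ using List.reverseRecOn generalizing v with
  | nil =>
    simp only [List.append_nil]
    exact ⟨fun h => ⟨v, h, .nil⟩, fun ⟨u, h1, h2⟩ => (reaches_nil_iff.1 h2) ▸ h1⟩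
  | append_singleton γ' a ih =>
    constructor
    · intro h
      rw [← List.append_assoc] at h
      obtain ⟨w, hw, he⟩ := reaches_snoc_iff.1 h
      obtain ⟨u, h1, h2⟩ := ih.1 hw
      exact ⟨u, h1, h2.snoc he⟩
    · rintro ⟨u, h1, h2⟩
      obtain ⟨w, hw, he⟩ := reaches_snoc_iff.1 h2
      rw [← List.append_assoc]
      exact (ih.2 ⟨u, h1, hw⟩).snoc he

end ReachesLemmas
section Colex
variable {A : Type*} [LinearOrder A]

theorem colex_trans {α β γ : List A} (h1 : ColexLt α β) (h2 : ColexLt β γ) : ColexLt α γ := by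
  unfold ColexLt at *
  exact lt_trans (show α.reverse < β.reverse from h1) (show β.reverse < γ.reverse from h2)

theorem colex_irrefl (α : List A) : ¬ ColexLt α α := fun h => lt_irrefl α.reverse h

theorem colex_asymm {α β : List A} (h1 : ColexLt α β) (h2 : ColexLt β α) : False :=
  colex_irrefl α (colex_trans h1 h2)

theorem colex_trichotomy {α β : List A} (h : α ≠ β) : ColexLt α β ∨ ColexLt β α := by
  rcases lt_trichotomy α.reverse β.reverse with h'|h'|h'
  · exact Or.inl h'
  · exact absurd (by simpa using congrArg List.reverse h') h
  · exact Or.inr h'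

theorem colex_nil {β : List A} (h : β ≠ []) : ColexLt [] β := by
  rcases List.eq_nil_or_concat β with rfl|⟨l,a,rfl⟩
  · exact absurd rfl h
  · show List.Lex _ _ _
    simp only [List.reverse_nil, List.concat_eq_append, List.reverse_append,
      List.reverse_cons, List.reverse_nil, List.nil_append, List.singleton_append]
    exact List.Lex.nil

theorem not_colex_nil {α : List A} (h : ColexLt α []) : False := by
  unfold ColexLt at h
  rw [List.reverse_nil] at h
  generalize α.reverse = l at h
  cases h

theorem colex_snoc_iff {α β : List A} {a b : A} :
    ColexLt (α ++ [a]) (β ++ [b]) ↔ a < b ∨ (a = b ∧ ColexLt α β) := by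
  constructor
  · intro h
    have h' : List.Lex (·<·) (a :: α.reverse) (b :: β.reverse) := by
      simpa [ColexLt] using h
    cases h' with
    | cons h'' => exact Or.inr ⟨rfl, h''⟩
    | rel h'' => exact Or.inl h''
  · intro h
    show List.Lex _ _ _
    simp only [List.reverse_append, List.reverse_cons, List.reverse_nil, List.nil_append,
      List.singleton_append]
    rcases h with h|⟨rfl,h⟩
    · exact List.Lex.rel h
    · exact List.Lex.cons h

theorem colex_snoc_same {α β : List A} (a : A) (h : ColexLt α β) :
    ColexLt (α ++ [a]) (β ++ [a]) := colex_snoc_iff.2 (Or.inr ⟨rfl, h⟩)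

theorem colex_between_snoc {α β μ : List A} {a : A}
    (h1 : ColexLt (α ++ [a]) μ) (h2 : ColexLt μ (β ++ [a])) :
    ∃ μ', μ = μ' ++ [a] ∧ ColexLt α μ' ∧ ColexLt μ' β := by
  rcases List.eq_nil_or_concat μ with rfl|⟨μ',b,rfl⟩
  · exact absurd h1 not_colex_nil
  · simp only [List.concat_eq_append] at *
    rcases colex_snoc_iff.1 h1 with h|⟨hab,h⟩ <;>
      rcases colex_snoc_iff.1 h2 with h'|⟨hba,h'⟩
    · exact absurd (h.trans h') (lt_irrefl a)
    · exact absurd (hba ▸ h) (lt_irrefl a)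
    · exact absurd (hab ▸ h') (lt_irrefl a)
    · exact ⟨μ', by rw [hba], h, h'⟩

end Colex
set_option linter.unusedSectionVars false

section MNlemmas
variable {A : Type*} [LinearOrder A] {L : Set (List A)}

theorem mnrel_refl (L : Set (List A)) (α : List A) : MNrel L α α := fun _ => Iff.rfl
theorem mnrel_symm {α β : List A} (h : MNrel L α β) : MNrel L β α := fun γ => (h γ).symm
theorem mnrel_trans {α β γ : List A} (h1 : MNrel L α β) (h2 : MNrel L β γ) : MNrel L α γ :=
  fun δ => (h1 δ).trans (h2 δ)
theorem mnrel_append {α β : List A} (γ : List A) (h : MNrel L α β) :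
    MNrel L (α ++ γ) (β ++ γ) := fun δ => by
  rw [List.append_assoc, List.append_assoc]; exact h (γ ++ δ)

theorem prefset_of_append {α γ : List A} (h : α ++ γ ∈ PrefSet L) : α ∈ PrefSet L := by
  obtain ⟨δ, hδ⟩ := h
  exact ⟨γ ++ δ, by rwa [← List.append_assoc]⟩

theorem mem_prefset_of_mem {α : List A} (h : α ∈ L) : α ∈ PrefSet L :=
  ⟨[], by simpa using h⟩

theorem prefset_closed_mnrel' {L : Set (List A)} {α β : List A} (h : MNrel L α β)
    (hα : α ∈ PrefSet L) : β ∈ PrefSet L := by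
  obtain ⟨δ, hδ⟩ := hα
  exact ⟨δ, (h δ).1 hδ⟩

theorem mnc_refl (L : Set (List A)) [LinearOrder A] (α : List A) : MNc L α α :=
  ⟨mnrel_refl L α, rfl, fun γ _ h => by
    rcases h with ⟨h1, h2⟩ | ⟨h1, h2⟩ <;> exact absurd (colex_trans h1 h2) (colex_irrefl α)⟩

theorem mnc_symm {α β : List A} (h : MNc L α β) : MNc L β α :=
  ⟨mnrel_symm h.1, h.2.1.symm, fun γ hγ hb => by
    have := h.2.2 γ hγ (hb.symm)
    exact mnrel_trans this h.1⟩

theorem mnc_trans {α β γ : List A} (h1 : MNc L α β) (h2 : MNc L β γ) : MNc L α γ := by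
  refine ⟨mnrel_trans h1.1 h2.1, h1.2.1.trans h2.2.1, ?_⟩
  intro δ hδ hb
  have hβα : MNrel L β α := mnrel_symm h1.1
  rcases hb with ⟨hc1, hc2⟩ | ⟨hc1, hc2⟩
  · by_cases hδβ : δ = β
    · exact hδβ ▸ hβα
    rcases colex_trichotomy hδβ with h'|h'
    · exact h1.2.2 δ hδ (Or.inl ⟨hc1, h'⟩)
    · exact mnrel_trans (h2.2.2 δ hδ (Or.inl ⟨h', hc2⟩)) hβα
  · by_cases hδβ : δ = β
    · exact hδβ ▸ hβα
    rcases colex_trichotomy hδβ with h'|h'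
    · exact mnrel_trans (h2.2.2 δ hδ (Or.inr ⟨hc1, h'⟩)) hβα
    · exact h1.2.2 δ hδ (Or.inr ⟨h', hc2⟩)

theorem getLast?_eq_some {α : List A} {a : A} (h : α.getLast? = some a) :
    ∃ α', α = α' ++ [a] := by
  rcases List.eq_nil_or_concat α with rfl|⟨α',b,h'⟩
  · simp at h
  · subst h'
    have : b = a := by simpa using h
    exact ⟨α', by simp [this]⟩

theorem mnc_snoc {α β : List A} (a : A) (h : MNc L α β) (hα : α ++ [a] ∈ PrefSet L) :
    β ++ [a] ∈ PrefSet L ∧ MNc L (α ++ [a]) (β ++ [a]) := by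
  have hβ : β ++ [a] ∈ PrefSet L := by
    obtain ⟨δ, hδ⟩ := hα
    refine ⟨δ, ?_⟩
    rw [List.append_assoc] at hδ ⊢
    exact (h.1 ([a] ++ δ)).1 hδ
  refine ⟨hβ, mnrel_append [a] h.1, by simp, ?_⟩
  intro μ hμ hb
  have key : ∃ μ', μ = μ' ++ [a] ∧
      ((ColexLt α μ' ∧ ColexLt μ' β) ∨ (ColexLt β μ' ∧ ColexLt μ' α)) := by
    rcases hb with ⟨h1', h2'⟩ | ⟨h1', h2'⟩
    · obtain ⟨μ', rfl, hh⟩ := colex_between_snoc h1' h2'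
      exact ⟨μ', rfl, Or.inl hh⟩
    · obtain ⟨μ', rfl, hh⟩ := colex_between_snoc h1' h2'
      exact ⟨μ', rfl, Or.inr hh⟩
  obtain ⟨μ', rfl, hh⟩ := key
  have hμ' : μ' ∈ PrefSet L := prefset_of_append hμ
  exact mnrel_append [a] (h.2.2 μ' hμ' hh)

theorem mnc_append {γ : List A} : ∀ {α β : List A}, MNc L α β → α ++ γ ∈ PrefSet L →
    β ++ γ ∈ PrefSet L ∧ MNc L (α ++ γ) (β ++ γ) := by
  induction γ with
  | nil =>
    intro α β h hα
    have hβ := prefset_closed_mnrel' h.1 (by simpa using hα : α ∈ PrefSet L)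
    simpa using ⟨hβ, h⟩
  | cons a γ' ih =>
    intro α β h hα
    rw [show α ++ (a :: γ') = (α ++ [a]) ++ γ' by simp] at hα ⊢
    rw [show β ++ (a :: γ') = (β ++ [a]) ++ γ' by simp]
    have h1 := mnc_snoc a h (prefset_of_append hα)
    exact ih h1.2 hα

theorem prefset_closed_mnrel {α β : List A} (h : MNrel L α β) (hα : α ∈ PrefSet L) :
    β ∈ PrefSet L := by
  obtain ⟨δ, hδ⟩ := hα
  exact ⟨δ, (h δ).1 hδ⟩
end MNlemmas
section Steps23
variable {A : Type*} [LinearOrder A] {L : Set (List A)}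

/-- Generic transfer: a fine equivalence with finite classes gives `MNcFiniteIndex`. -/
theorem mncFiniteIndex_of_refining (sim : List A → List A → Prop)
    (hrefl : ∀ α ∈ PrefSet L, sim α α)
    (hsub : ∀ α β, sim α β → MNc L α β)
    (hfin : {Cl : Set (List A) | ∃ α ∈ PrefSet L, Cl = {β | sim α β}}.Finite) :
    MNcFiniteIndex L := by
  set h : Set (List A) → Set (List A) :=
    fun S => {β | β ∈ PrefSet L ∧ ∃ α ∈ S, MNc L α β} with hh
  apply Set.Finite.subset (hfin.image h)
  rintro Cl ⟨α₀, hα₀, rfl⟩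
  refine ⟨{β | sim α₀ β}, ⟨α₀, hα₀, rfl⟩, ?_⟩
  ext β
  simp only [hh, Set.mem_setOf_eq, Set.mem_sep_iff]
  constructor
  · rintro ⟨hβ, α, hα, hmn⟩
    exact ⟨hβ, mnc_trans (hsub _ _ hα) hmn⟩
  · rintro ⟨hβ, hmn⟩
    exact ⟨hβ, α₀, hrefl α₀ hα₀, hmn⟩

theorem mnrel_of_sim (sim : List A → List A → Prop)
    (hmem : ∀ α β, sim α β → α ∈ PrefSet L ∧ β ∈ PrefSet L)
    (hsymm : ∀ α β, sim α β → sim β α)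
    (hright : ∀ α β γ, sim α β → (α ++ γ) ∈ PrefSet L →
      ((β ++ γ) ∈ PrefSet L ∧ sim (α ++ γ) (β ++ γ)))
    (hunion : ∀ α β, α ∈ L → sim α β → β ∈ L)
    {α β : List A} (h : sim α β) : MNrel L α β := by
  intro γ
  constructor
  · intro hγ
    have h1 := hright α β γ h (mem_prefset_of_mem hγ)
    exact hunion _ _ hγ h1.2
  · intro hγ
    have h1 := hright β α γ (hsymm _ _ h) (mem_prefset_of_mem hγ)
    exact hunion _ _ hγ h1.2

theorem step32 : UnionOfNiceEquiv L → MNcFiniteIndex L := by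
  rintro ⟨sim, hmem, hrefl, hsymm, htrans, hright, hconv, hlast, hfin, hunion⟩
  have hmn : ∀ α β, sim α β → MNrel L α β :=
    fun α β h => mnrel_of_sim sim hmem hsymm hright hunion h
  apply mncFiniteIndex_of_refining sim hrefl _ hfin
  intro α β h
  refine ⟨hmn _ _ h, hlast _ _ h, ?_⟩
  intro δ hδ hb
  rcases hb with ⟨h1, h2⟩ | ⟨h1, h2⟩
  · have := hconv α δ β h hδ h1 h2
    exact mnrel_symm (hmn _ _ this)
  · have := hconv β δ α (hsymm _ _ h) hδ h1 h2
    exact mnrel_trans (mnrel_symm (hmn _ _ this)) (mnrel_symm (hmn _ _ h))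

theorem step23 : MNcFiniteIndex L → UnionOfNiceEquiv L := by
  intro hfin
  refine ⟨fun α β => α ∈ PrefSet L ∧ β ∈ PrefSet L ∧ MNc L α β, ?_, ?_, ?_, ?_, ?_, ?_, ?_, ?_, ?_⟩
  · exact fun α β h => ⟨h.1, h.2.1⟩
  · exact fun α hα => ⟨hα, hα, mnc_refl L α⟩
  · exact fun α β h => ⟨h.2.1, h.1, mnc_symm h.2.2⟩
  · exact fun α β γ h1 h2 => ⟨h1.1, h2.2.1, mnc_trans h1.2.2 h2.2.2⟩
  · intro α β γ h hα
    obtain ⟨hβγ, hmc⟩ := mnc_append h.2.2 hα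
    exact ⟨hβγ, hα, hβγ, hmc⟩
  · -- convexity
    intro α β γ h hβ h1 h2
    refine ⟨h.1, hβ, ?_⟩
    have hμα : MNrel L β α := h.2.2.2.2 β hβ (Or.inl ⟨h1, h2⟩)
    -- getLast? α = getLast? β
    have hlast : α.getLast? = β.getLast? := by
      rcases List.eq_nil_or_concat α with rfl|⟨α', a, ha⟩
      · -- α = [], so γ = [] as getLast? γ = none; contradiction with β ≺ γ
        have hγnil : γ = [] := by
          have hge := h.2.2.2.1
          simp only [List.getLast?_nil] at hge
          rcases List.eq_nil_or_concat γ with rfl|⟨γ', c, hc⟩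
          · rfl
          · rw [List.concat_eq_append] at hc; subst hc; simp at hge
        subst hγnil
        exact absurd h2 not_colex_nil
      · rw [List.concat_eq_append] at ha
        subst ha
        have hγ : ∃ γ', γ = γ' ++ [a] := by
          apply getLast?_eq_some
          rw [← h.2.2.2.1]
          simp
        obtain ⟨γ', rfl⟩ := hγ
        obtain ⟨β', rfl, _, _⟩ := colex_between_snoc h1 h2
        simp
    refine ⟨mnrel_symm hμα, hlast, ?_⟩
    intro δ hδ hb
    rcases hb with ⟨hb1, hb2⟩ | ⟨hb1, hb2⟩
    · exact h.2.2.2.2 δ hδ (Or.inl ⟨hb1, colex_trans hb2 h2⟩)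
    · exact absurd (colex_trans h1 (colex_trans hb1 hb2)) (colex_irrefl α)
  · exact fun α β h => h.2.2.2.1
  · -- finiteness
    apply Set.Finite.subset hfin
    rintro Cl ⟨α, hα, rfl⟩
    refine ⟨α, hα, ?_⟩
    ext β
    simp only [Set.mem_setOf_eq, Set.mem_sep_iff]
    exact ⟨fun h => ⟨h.2.1, h.2.2⟩, fun h => ⟨hα, h.1, h.2⟩⟩
  · intro α β hαL h
    have := h.2.2.1 []
    simpa using this.1 (by simpa using hαL)
end Steps23
section Step34
variable {A : Type*} [LinearOrder A]

theorem Reaches.map {V V' : Type*} {E : V → A → V → Prop} {E' : V' → A → V' → Prop}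
    (f : V → V') (hE : ∀ u a w, E u a w → E' (f u) a (f w)) {s : V} :
    ∀ {α v}, Reaches E s α v → Reaches E' (f s) α (f v) := by
  intro α v h
  induction h with
  | nil => exact .nil
  | snoc h1 h2 ih => exact ih.snoc (hE _ _ _ h2)

/-- Transport an arbitrary-universe Wheeler DFA down to `Type 0`. -/
theorem wheelerDFA_of_data {L : Set (List A)} {W : Type*} [Fintype W]
    (E : W → A → W → Prop) (F : Set W) (s : W) (r : W → W → Prop)
    (h1 : ∀ u a v v', E u a v → E u a v' → v = v')
    (h2 : ∀ u a, ¬ E u a s)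
    (h3 : ∀ x, (∀ u a, ¬ E u a x) → x = s)
    (h4 : ∀ x, ∃ α, Reaches E s α x)
    (h5 : WheelerRel E r)
    (h6 : Lang E F s = L) : WheelerDFARecog L := by
  classical
  let e := Fintype.equivFin W
  let E' : Fin (Fintype.card W) → A → Fin (Fintype.card W) → Prop :=
    fun x a y => E (e.symm x) a (e.symm y)
  have hEfwd : ∀ u a w, E u a w → E' (e u) a (e w) := by
    intro u a w h; simp only [E', Equiv.symm_apply_apply]; exact h
  have hEbwd : ∀ u a w, E' u a w → E (e.symm u) a (e.symm w) := fun _ _ _ h => h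
  refine ⟨Fin (Fintype.card W), inferInstance, E', {x | e.symm x ∈ F}, e s,
    fun x y => r (e.symm x) (e.symm y), ?_, ?_, ?_, ?_, ?_, ?_⟩
  · intro u a v v' hv hv'
    exact e.symm.injective (h1 _ _ _ _ hv hv')
  · intro u a h
    exact h2 (e.symm u) a (by simpa [E'] using h)
  · intro x hx
    have : e.symm x = s := by
      apply h3
      intro u a hu
      exact hx (e u) a (by simpa [E', Equiv.symm_apply_apply] using hu)
    rw [← this]; simp
  · intro x
    obtain ⟨α, hα⟩ := h4 (e.symm x)
    exact ⟨α, by simpa using Reaches.map e hEfwd hα⟩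
  · obtain ⟨⟨hirr, htr, htot⟩, hw2, hw3, hw4⟩ := h5
    refine ⟨⟨fun x => hirr _, fun x y z => htr _ _ _,
      fun x y hxy => htot _ _ (fun h => hxy (by simpa using congrArg e h))⟩, ?_, ?_, ?_⟩
    · intro x w hx hw
      apply hw2
      · intro u a hu
        exact hx (e u) a (by simpa [E', Equiv.symm_apply_apply] using hu)
      · obtain ⟨u, a, hu⟩ := hw
        exact ⟨e.symm u, a, hu⟩
    · intro u₁ a₁ v₁ u₂ a₂ v₂ hv₁ hv₂ ha
      exact hw3 _ _ _ _ _ _ hv₁ hv₂ ha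
    · intro u₁ v₁ u₂ v₂ a hv₁ hv₂ hr
      rcases hw4 _ _ _ _ _ hv₁ hv₂ hr with h | h
      · exact Or.inl h
      · exact Or.inr (e.symm.injective h)
  · rw [← h6]
    ext α
    constructor
    · rintro ⟨w, hwF, hw⟩
      refine ⟨e.symm w, hwF, ?_⟩
      have := Reaches.map e.symm hEbwd hw
      simpa using this
    · rintro ⟨w, hwF, hw⟩
      exact ⟨e w, by simpa using hwF, by simpa using Reaches.map e hEfwd hw⟩

theorem step34 {L : Set (List A)} : UnionOfNiceEquiv L → WheelerDFARecog L := by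
  rintro ⟨sim, hmem, hrefl, hsymm, htrans, hright, hconv, hlast, hfin, hunion⟩
  classical
  by_cases hempty : L = ∅
  · subst hempty
    refine ⟨Unit, inferInstance, fun _ _ _ => False, ∅, (), fun _ _ => False,
      ?_, ?_, ?_, ?_, ?_, ?_⟩
    · intro _ _ _ _ h; exact h.elim
    · intro _ _ h; exact h
    · intro x _; rfl
    · intro x; exact ⟨[], by cases x; exact .nil⟩
    · exact ⟨⟨fun _ h => h, fun _ _ _ h => h.elim, fun x y h => absurd rfl h⟩,
        fun _ _ _ h => (h.choose_spec.choose_spec).elim,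
        fun _ _ _ _ _ _ h => h.elim, fun _ _ _ _ _ h => h.elim⟩
    · ext α; simp [Lang]
  · -- L nonempty
    have hP0 : ([] : List A) ∈ PrefSet L := by
      obtain ⟨x, hx⟩ := Set.nonempty_iff_ne_empty.2 hempty
      exact ⟨x, by simpa using hx⟩
    set P := PrefSet L with hP
    set CS : Set (Set (List A)) := {Cl | ∃ α ∈ P, Cl = {β | sim α β}} with hCS
    haveI : Finite ↥CS := hfin.to_subtype
    haveI : Fintype ↥CS := Fintype.ofFinite _
    -- key membership lemma
    have hkey : ∀ (C : ↥CS) {α β : List A}, α ∈ C.1 → (β ∈ C.1 ↔ sim α β) := by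
      rintro ⟨C, α₀, hα₀, rfl⟩ α β hα
      simp only [Set.mem_setOf_eq] at *
      exact ⟨fun h => htrans _ _ _ (hsymm _ _ hα) h,
        fun h => htrans _ _ _ hα h⟩
    have hPC : ∀ (C : ↥CS) {α : List A}, α ∈ C.1 → α ∈ P := by
      rintro ⟨C, α₀, hα₀, rfl⟩ α hα
      exact (hmem _ _ hα).2
    have hne0 : ∀ C : ↥CS, ∃ α, α ∈ C.1 ∧ α ∈ P := by
      rintro ⟨C, α₀, hα₀, rfl⟩
      exact ⟨α₀, hrefl _ hα₀, hα₀⟩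
    have hCeq : ∀ (C C' : ↥CS) {α : List A}, α ∈ C.1 → α ∈ C'.1 → C = C' := by
      intro C C' α hα hα'
      apply Subtype.ext
      ext β
      rw [hkey C hα, hkey C' hα']
    have hsimC : ∀ (C : ↥CS) {α β : List A}, α ∈ C.1 → β ∈ C.1 → sim α β := by
      intro C α β hα hβ
      exact (hkey C hα).1 hβ
    have hmemsim : ∀ (C : ↥CS) {α β : List A}, α ∈ C.1 → sim α β → β ∈ C.1 := by
      intro C α β hα h
      exact (hkey C hα).2 h
    let E0 : ↥CS → A → ↥CS → Prop := fun C a C' => ∃ α, α ∈ C.1 ∧ α ++ [a] ∈ C'.1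
    let s0 : ↥CS := ⟨{β | sim [] β}, [], hP0, rfl⟩
    let F0 : Set ↥CS := {C | ∃ α ∈ C.1, α ∈ L}
    let r0 : ↥CS → ↥CS → Prop := fun C C' => C ≠ C' ∧ ∃ α β, α ∈ C.1 ∧ β ∈ C'.1 ∧ ColexLt α β
    -- the comparability lemma
    have rAll : ∀ {C C' : ↥CS}, r0 C C' → ∀ α ∈ C.1, ∀ β ∈ C'.1, ColexLt α β := by
      rintro C C' ⟨hne, α₁, β₁, hα₁, hβ₁, h₁⟩ α hα β hβ
      have hαβ : α ≠ β := fun h => hne (hCeq C C' hα (h ▸ hβ))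
      rcases colex_trichotomy hαβ with h | h
      · exact h
      · exfalso
        rcases eq_or_ne α β₁ with rfl | hne'
        · exact hne (hCeq C C' hα hβ₁)
        rcases colex_trichotomy hne' with h' | h'
        · -- β ≺ α ≺ β₁ : α joins C'
          have : sim β α := hconv β α β₁ (hsimC C' hβ hβ₁) (hPC C hα) h h'
          exact hne (hCeq C C' hα (hmemsim C' hβ this))
        · -- α₁ ≺ β₁ ≺ α : β₁ joins C
          have : sim α₁ β₁ := hconv α₁ β₁ α (hsimC C hα₁ hα) (hPC C' hβ₁) h₁ h'
          exact hne (hCeq C C' (hmemsim C hα₁ this) hβ₁)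
    -- reaches → membership
    have hreach_mem : ∀ {α : List A} {C : ↥CS}, Reaches E0 s0 α C → α ∈ C.1 := by
      intro α C h
      induction h with
      | nil => exact hrefl [] hP0
      | @snoc α' U C a h1 h2 ih =>
        obtain ⟨β, hβU, hβC⟩ := h2
        have hsim : sim β α' := hsimC U hβU ih
        have h3 := hright β α' [a] hsim (hPC C hβC)
        exact hmemsim C hβC h3.2
    -- membership → reaches
    have hmem_reach : ∀ α : List A, α ∈ P → ∃ C : ↥CS, α ∈ C.1 ∧ Reaches E0 s0 α C := by
      intro α
      induction α using List.reverseRecOn with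
      | nil => exact fun _ => ⟨s0, hrefl [] hP0, .nil⟩
      | append_singleton α' a ih =>
        intro hα
        obtain ⟨C', hm', hre⟩ := ih (prefset_of_append hα)
        refine ⟨⟨{β | sim (α' ++ [a]) β}, α' ++ [a], hα, rfl⟩, hrefl _ hα, ?_⟩
        exact hre.snoc ⟨α', hm', hrefl _ hα⟩
    -- apply transport
    apply wheelerDFA_of_data E0 F0 s0 r0
    · -- determinism
      rintro U a V₁ V₂ ⟨α, hαU, hαV₁⟩ ⟨β, hβU, hβV₂⟩
      have h3 := hright α β [a] (hsimC U hαU hβU) (hPC V₁ hαV₁)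
      exact hCeq V₁ V₂ hαV₁ (hmemsim V₂ hβV₂ (hsymm _ _ h3.2))
    · -- no edges into s0
      rintro U a ⟨β, hβU, hβs⟩
      have : sim [] (β ++ [a]) := hsimC s0 (hrefl [] hP0) hβs
      simpa using hlast _ _ this
    · -- in-degree 0 implies s0
      intro C hC
      obtain ⟨x, hxC, hxP⟩ := hne0 C
      rcases List.eq_nil_or_concat x with rfl | ⟨α', a, hx⟩
      · exact hCeq C s0 hxC (hrefl [] hP0)
      · exfalso
        rw [List.concat_eq_append] at hx
        subst hx
        have hα'P : α' ∈ P := prefset_of_append hxP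
        exact hC ⟨{β | sim α' β}, α', hα'P, rfl⟩ a ⟨α', hrefl _ hα'P, hxC⟩
    · -- reachability
      intro C
      obtain ⟨x, hxC, hxP⟩ := hne0 C
      obtain ⟨C', hm', hre⟩ := hmem_reach x hxP
      exact ⟨x, (hCeq C' C hm' hxC) ▸ hre⟩
    · -- Wheeler order
      refine ⟨⟨?_, ?_, ?_⟩, ?_, ?_, ?_⟩
      · rintro C ⟨hne, -⟩; exact hne rfl
      · rintro C C' C'' h h'
        obtain ⟨β, hβ, hβP⟩ := hne0 C'
        constructor
        · rintro rfl
          exact colex_asymm (rAll h _ (hne0 C).choose_spec.1 _ hβ)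
            (rAll h' _ hβ _ (hne0 C).choose_spec.1)
        · obtain ⟨α, hα, hαP⟩ := hne0 C
          obtain ⟨γ, hγ, hγP⟩ := hne0 C''
          exact ⟨α, γ, hα, hγ, colex_trans (rAll h _ hα _ hβ) (rAll h' _ hβ _ hγ)⟩
      · intro C C' hne
        obtain ⟨α, hα, hαP⟩ := hne0 C
        obtain ⟨β, hβ, hβP⟩ := hne0 C'
        have hαβ : α ≠ β := fun h => hne (hCeq C C' hα (h ▸ hβ))
        rcases colex_trichotomy hαβ with h | h
        · exact Or.inl ⟨hne, α, β, hα, hβ, h⟩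
        · exact Or.inr ⟨fun h' => hne h'.symm, β, α, hβ, hα, h⟩
      · -- axiom 2
        rintro x w hx ⟨U, a, β, hβU, hβw⟩
        have hxs : x = s0 := by
          -- re-derive: x has in-degree 0
          obtain ⟨y, hyC, hyP⟩ := hne0 x
          rcases List.eq_nil_or_concat y with rfl | ⟨α', b, hy⟩
          · exact hCeq x s0 hyC (hrefl [] hP0)
          · exfalso
            rw [List.concat_eq_append] at hy
            subst hy
            have hα'P : α' ∈ P := prefset_of_append hyP
            exact hx ⟨{β | sim α' β}, α', hα'P, rfl⟩ b ⟨α', hrefl _ hα'P, hyC⟩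
        subst hxs
        have hws : w ≠ s0 := by
          rintro rfl
          have : sim [] (β ++ [a]) := hsimC s0 (hrefl [] hP0) hβw
          simpa using hlast _ _ this
        refine ⟨fun h => hws h.symm, [], β ++ [a], hrefl [] hP0, hβw, colex_nil (by simp)⟩
      · -- axiom 3
        rintro U₁ a₁ V₁ U₂ a₂ V₂ ⟨α, hαU, hαV⟩ ⟨β, hβU, hβV⟩ ha
        have hne : V₁ ≠ V₂ := by
          rintro rfl
          have := hlast _ _ (hsimC V₁ hαV hβV)
          simp at this
          exact absurd (this ▸ ha) (lt_irrefl a₂)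
        exact ⟨hne, _, _, hαV, hβV, colex_snoc_iff.2 (Or.inl ha)⟩
      · -- axiom 4
        rintro U₁ V₁ U₂ V₂ a ⟨α, hαU, hαV⟩ ⟨β, hβU, hβV⟩ hr
        by_cases hV : V₁ = V₂
        · exact Or.inr hV
        · exact Or.inl ⟨hV, _, _, hαV, hβV, colex_snoc_same a (rAll hr _ hαU _ hβU)⟩
    · -- language
      ext α
      constructor
      · rintro ⟨C, ⟨β, hβC, hβL⟩, hre⟩
        exact hunion β α hβL (hsimC C hβC (hreach_mem hre))
      · intro hα
        obtain ⟨C, hm, hre⟩ := hmem_reach α (mem_prefset_of_mem hα)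
        exact ⟨C, ⟨α, hm, hα⟩, hre⟩
end Step34
section Step12
variable {A : Type*} [LinearOrder A]

theorem step12 {L : Set (List A)} : WheelerNFARecog L → MNcFiniteIndex L := by
  rintro ⟨W, _, E, F, s, r, hs_noin, hnoin_s, hreach_all, ⟨⟨hirr, htr, htot⟩, hw2, hw3, hw4⟩, hLang⟩
  classical
  set P := PrefSet L with hPdef
  -- every prefix reaches some state
  have hIstr_ne : ∀ α ∈ P, ∃ u, Reaches E s α u := by
    rintro α ⟨δ, hδ⟩
    rw [← hLang] at hδ
    obtain ⟨w, -, hw⟩ := hδ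
    obtain ⟨u, hu, -⟩ := reaches_append_iff.1 hw
    exact ⟨u, hu⟩
  -- incoming labels are unique
  have hlabel : ∀ {u v x : W} {a b : A}, E u a x → E v b x → a = b := by
    intro u v x a b h1 h2
    rcases lt_trichotomy a b with h | h | h
    · exact absurd (hw3 _ _ _ _ _ _ h1 h2 h) (hirr x)
    · exact h
    · exact absurd (hw3 _ _ _ _ _ _ h2 h1 h) (hirr x)
  -- only [] reaches s
  have hreach_s : ∀ {γ : List A}, Reaches E s γ s → γ = [] := by
    intro γ h
    cases h with
    | nil => rfl
    | snoc h1 h2 => exact absurd h2 (hs_noin _ _)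
  -- Lemma A: monotonicity of reached states
  have lemA : ∀ (β α : List A) (u v : W), ColexLt α β → Reaches E s α u → Reaches E s β v →
      r u v ∨ u = v ∨ (Reaches E s β u ∧ Reaches E s α v) := by
    intro β
    induction β using List.reverseRecOn with
    | nil => intro α u v h _ _; exact absurd h not_colex_nil
    | append_singleton β' b ih =>
      intro α u v hab h1 h2
      obtain ⟨v', hv', hev⟩ := reaches_snoc_iff.1 h2
      rcases List.eq_nil_or_concat α with rfl | ⟨α', a, ha⟩
      · have hu : u = s := reaches_nil_iff.1 h1
        subst hu
        exact Or.inl (hw2 _ _ hs_noin ⟨v', b, hev⟩)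
      · rw [List.concat_eq_append] at ha
        subst ha
        obtain ⟨u', hu', heu⟩ := reaches_snoc_iff.1 h1
        rcases colex_snoc_iff.1 hab with h | ⟨rfl, h⟩
        · exact Or.inl (hw3 _ _ _ _ _ _ heu hev h)
        · rcases eq_or_ne u' v' with rfl | hne
          · exact Or.inr (Or.inr ⟨hv'.snoc heu, hu'.snoc hev⟩)
          · rcases ih α' u' v' h hu' hv' with h' | h' | ⟨h'1, h'2⟩
            · rcases hw4 _ _ _ _ _ heu hev h' with h'' | h''
              · exact Or.inl h''
              · exact Or.inr (Or.inl h'')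
            · exact absurd h' hne
            · exact Or.inr (Or.inr ⟨h'1.snoc heu, h'2.snoc hev⟩)
  -- convexity of the sets I_u
  have hconvex : ∀ {γ₁ γ₂ γ₃ : List A} {u v : W}, ColexLt γ₁ γ₂ → ColexLt γ₂ γ₃ →
      Reaches E s γ₁ u → Reaches E s γ₃ u → Reaches E s γ₂ v → Reaches E s γ₂ u := by
    intro γ₁ γ₂ γ₃ u v h12 h23 hg1 hg3 hg2
    rcases lemA γ₃ γ₂ v u h23 hg2 hg3 with h | h | ⟨-, h⟩
    · rcases lemA γ₂ γ₁ u v h12 hg1 hg2 with h' | h' | ⟨h', -⟩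
      · exact absurd (htr _ _ _ h' h) (hirr u)
      · exact h' ▸ hg2
      · exact h'
    · exact h ▸ hg2
    · exact h
  -- the MN relation only depends on reached states
  have hMN : ∀ α β : List A, (∀ w, Reaches E s α w ↔ Reaches E s β w) → MNrel L α β := by
    intro α β h γ
    rw [← hLang]
    constructor
    · rintro ⟨f, hf, hre⟩
      obtain ⟨u, hu1, hu2⟩ := reaches_append_iff.1 hre
      exact ⟨f, hf, reaches_append_iff.2 ⟨u, (h u).1 hu1, hu2⟩⟩
    · rintro ⟨f, hf, hre⟩
      obtain ⟨u, hu1, hu2⟩ := reaches_append_iff.1 hre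
      exact ⟨f, hf, reaches_append_iff.2 ⟨u, (h u).2 hu1, hu2⟩⟩
  -- the last letter only depends on reached states
  have hlastI : ∀ α β : List A, α ∈ P → β ∈ P → (∀ w, Reaches E s α w ↔ Reaches E s β w) →
      α.getLast? = β.getLast? := by
    intro α β hα hβ h
    obtain ⟨u, hu⟩ := hIstr_ne α hα
    rcases List.eq_nil_or_concat α with rfl | ⟨α', a, ha⟩
    · have hus : u = s := reaches_nil_iff.1 hu
      rw [hus] at hu
      have := hreach_s ((h s).1 hu)
      rw [this]
    · rw [List.concat_eq_append] at ha
      subst ha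
      rcases List.eq_nil_or_concat β with rfl | ⟨β', b, hb⟩
      · have hus : u = s := reaches_nil_iff.1 ((h u).1 hu)
        rw [hus] at hu
        have := hreach_s hu
        simp at this
      · rw [List.concat_eq_append] at hb
        subst hb
        obtain ⟨u₁, -, he1⟩ := reaches_snoc_iff.1 hu
        obtain ⟨u₂, -, he2⟩ := reaches_snoc_iff.1 ((h u).1 hu)
        have : a = b := hlabel he1 he2
        simp [this]
  -- the refinement relation
  set simW : List A → List A → Prop := fun α β => α ∈ P ∧ β ∈ P ∧
    (∀ w, Reaches E s α w ↔ Reaches E s β w) ∧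
    ∀ μ ∈ P, ((ColexLt α μ ∧ ColexLt μ β) ∨ (ColexLt β μ ∧ ColexLt μ α)) →
      (∀ w, Reaches E s μ w ↔ Reaches E s α w) with hsimWdef
  have hreflW : ∀ α ∈ P, simW α α := by
    intro α hα
    refine ⟨hα, hα, fun w => Iff.rfl, ?_⟩
    rintro μ hμ (⟨h1, h2⟩ | ⟨h1, h2⟩) <;> exact absurd (colex_trans h1 h2) (colex_irrefl α)
  have hsymmW : ∀ {α β}, simW α β → simW β α := by
    rintro α β ⟨hα, hβ, hI, hbet⟩
    refine ⟨hβ, hα, fun w => (hI w).symm, ?_⟩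
    intro μ hμ hb
    have := hbet μ hμ hb.symm
    exact fun w => (this w).trans (hI w)
  have hsubW : ∀ α β, simW α β → MNc L α β := by
    rintro α β ⟨hα, hβ, hI, hbet⟩
    refine ⟨hMN _ _ hI, hlastI _ _ hα hβ hI, ?_⟩
    intro μ hμ hb
    exact hMN _ _ (hbet μ hμ hb)
  -- the signature map
  set R : List A → Set W := fun α => {w | (∃ γ ∈ P, Reaches E s γ w) ∧
    ∀ δ ∈ P, Reaches E s δ w → ColexLt α δ} with hRdef
  -- simW implies equal signatures
  have key1R : ∀ {α β}, simW α β → R α ⊆ R β := by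
    rintro α β ⟨hα, hβ, hI, hbet⟩ w ⟨hex, hall⟩
    refine ⟨hex, ?_⟩
    intro δ hδ hδw
    have hαδ : ColexLt α δ := hall δ hδ hδw
    rcases eq_or_ne δ β with rfl | hne
    · exact absurd (hall α hα ((hI w).2 hδw)) (colex_irrefl α)
    rcases colex_trichotomy hne with h | h
    · have := hbet δ hδ (Or.inl ⟨hαδ, h⟩)
      exact absurd (hall α hα ((this w).1 hδw)) (colex_irrefl α)
    · exact h
  have key1 : ∀ {α β}, simW α β → (∀ w, Reaches E s α w ↔ Reaches E s β w) ∧ R α = R β := by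
    intro α β h
    exact ⟨h.2.2.1, Set.Subset.antisymm (key1R h) (key1R (hsymmW h))⟩
  -- equal signatures imply simW
  have key2' : ∀ α β, α ∈ P → β ∈ P → ColexLt α β →
      (∀ w, Reaches E s α w ↔ Reaches E s β w) → R α = R β → simW α β := by
    intro α β hα hβ hαβ hI hR
    refine ⟨hα, hβ, hI, ?_⟩
    rintro μ hμ (⟨h1, h2⟩ | ⟨h1, h2⟩)
    swap
    · exact absurd (colex_trans hαβ (colex_trans h1 h2)) (colex_irrefl α)
    intro w
    constructor
    · intro hμw
      by_contra hwα
      have hwR : w ∈ R α := by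
        refine ⟨⟨μ, hμ, hμw⟩, ?_⟩
        intro δ hδ hδw
        rcases eq_or_ne δ α with rfl | hne
        · exact absurd hδw hwα
        rcases colex_trichotomy hne with h | h
        · -- δ ≺ α ≺ μ : convexity puts w in I_α
          obtain ⟨v, hv⟩ := hIstr_ne α hα
          exact absurd (hconvex h h1 hδw hμw hv) hwα
        · exact h
      rw [hR] at hwR
      exact absurd (hwR.2 μ hμ hμw) (fun h => colex_asymm h h2)
    · intro hαw
      obtain ⟨v, hv⟩ := hIstr_ne μ hμ
      exact hconvex h1 h2 hαw ((hI w).1 hαw) hv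
  have key2 : ∀ α β, α ∈ P → β ∈ P →
      (∀ w, Reaches E s α w ↔ Reaches E s β w) → R α = R β → simW α β := by
    intro α β hα hβ hI hR
    rcases eq_or_ne α β with rfl | hne
    · exact hreflW α hα
    rcases colex_trichotomy hne with h | h
    · exact key2' α β hα hβ h hI hR
    · exact hsymmW (key2' β α hβ hα h (fun w => (hI w).symm) hR.symm)
  -- finiteness of simW classes
  have hfinW : {Cl : Set (List A) | ∃ α ∈ P, Cl = {β | simW α β}}.Finite := by
    have : {Cl : Set (List A) | ∃ α ∈ P, Cl = {β | simW α β}} ⊆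
        (fun p : Set W × Set W => {β | β ∈ P ∧ {w | Reaches E s β w} = p.1 ∧ R β = p.2}) ''
          Set.univ := by
      rintro Cl ⟨α, hα, rfl⟩
      refine ⟨({w | Reaches E s α w}, R α), Set.mem_univ _, ?_⟩
      ext β
      simp only [Set.mem_setOf_eq]
      constructor
      · rintro ⟨hβ, h1, h2⟩
        exact hsymmW (key2 β α hβ hα (fun w => by rw [Set.ext_iff] at h1; exact (h1 w))
          (h2.trans rfl) )
      · intro h
        obtain ⟨hI, hR⟩ := key1 h
        exact ⟨h.2.1, Set.ext (fun w => (hI w).symm), hR.symm⟩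
    exact Set.Finite.subset (Set.finite_univ.image _) this
  exact mncFiniteIndex_of_refining simW hreflW hsubW hfinW
end Step12

section Final41
variable {A : Type*}

theorem step41 [LinearOrder A] {L : Set (List A)} :
    WheelerDFARecog L → WheelerNFARecog L := by
  rintro ⟨W, hW, E, F, s, r, -, h2, h3, h4, h5, h6⟩
  exact ⟨W, hW, E, F, s, r, h2, h3, h4, h5, h6⟩
end Final41

/-- Myhill-Nerode theorem for Wheeler languages: the four conditions are
equivalent. -/
theorem stmt13 {A : Type*} [LinearOrder A] (L : Set (List A)) :
    (WheelerNFARecog L ↔ MNcFiniteIndex L) ∧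
    (MNcFiniteIndex L ↔ UnionOfNiceEquiv L) ∧
    (UnionOfNiceEquiv L ↔ WheelerDFARecog L) := by
  refine ⟨⟨step12, fun h => step41 (step34 (step23 h))⟩, ⟨step23, step32⟩,
    ⟨step34, fun h => step23 (step12 (step41 h))⟩⟩
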